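/- Let A = conv(0, e_1, e_2, e_1 + e_2, e_3) ⊂ ℝ³ be the square pyramid, B = [0, e_1] and C = [0, e_2]. Then V(A,A,A)·V(A,B,C) = 2·V(A,A,B)·V(A,A,C), where V is the mixed volume in ℝ³. -/

import Mathlib

open MeasureTheory

/-- The segment joining the origin to `v`, as a convex body in `ℝ³`. -/
noncomputable def segCB (v : Fin 3 → ℝ) : ConvexBody (Fin 3 → ℝ) :=
  ⟨segment ℝ 0 v, convex_segment 0 v,
    by rw [← convexHull_pair]; exact (Set.toFinite {0, v}).isCompact_convexHull ℝ,
    ⟨0, left_mem_segment ℝ 0 v⟩⟩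

/-- The square pyramid `conv(0, e₁, e₂, e₁+e₂, e₃)`, as a convex body in `ℝ³`. -/
noncomputable def pyramidCB : ConvexBody (Fin 3 → ℝ) :=
  ⟨convexHull ℝ {0, ![1, 0, 0], ![0, 1, 0], ![1, 1, 0], ![0, 0, 1]},
    convex_convexHull ℝ _,
    (Set.toFinite _).isCompact_convexHull ℝ,
    ⟨0, subset_convexHull ℝ _ (by simp)⟩⟩

section Aux

open Set Pointwise

/-- The region `{0 ≤ z ≤ 1, 0 ≤ x ≤ s+1-z, 0 ≤ y ≤ t+1-z}`. -/
def stmt16Reg (s t : ℝ) : Set (Fin 3 → ℝ) :=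
  {p | p 2 ∈ Icc (0:ℝ) 1 ∧ p 0 ∈ Icc 0 (s + 1 - p 2) ∧ p 1 ∈ Icc 0 (t + 1 - p 2)}

lemma stmt16_convex_Reg (s t : ℝ) : Convex ℝ (stmt16Reg s t) := by
  rintro x ⟨⟨hx1, hx2⟩, ⟨hx3, hx4⟩, hx5, hx6⟩ y ⟨⟨hy1, hy2⟩, ⟨hy3, hy4⟩, hy5, hy6⟩ a b ha hb hab
  simp only [stmt16Reg, mem_setOf_eq, mem_Icc, Pi.add_apply, Pi.smul_apply, smul_eq_mul]
  refine ⟨⟨?_, ?_⟩, ⟨?_, ?_⟩, ?_, ?_⟩ <;>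
    nlinarith [mul_le_mul_of_nonneg_left hx2 ha, mul_le_mul_of_nonneg_left hy2 hb,
      mul_le_mul_of_nonneg_left hx4 ha, mul_le_mul_of_nonneg_left hy4 hb,
      mul_le_mul_of_nonneg_left hx6 ha, mul_le_mul_of_nonneg_left hy6 hb,
      mul_nonneg ha hx1, mul_nonneg hb hy1, mul_nonneg ha hx3, mul_nonneg hb hy3,
      mul_nonneg ha hx5, mul_nonneg hb hy5]

lemma stmt16_pyr_eq :
    convexHull ℝ {0, ![1, 0, 0], ![0, 1, 0], ![1, 1, 0], ![0, 0, 1]} = stmt16Reg 0 0 := by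
  apply Subset.antisymm
  · apply convexHull_min _ (stmt16_convex_Reg 0 0)
    rintro p (rfl | rfl | rfl | rfl | rfl) <;> simp [stmt16Reg, mem_Icc]
  · rintro x ⟨⟨hz0, hz1⟩, ⟨hx0, hx1⟩, hy0, hy1⟩
    simp only [zero_add, sub_zero] at hx1 hy1
    set z := x 2 with hzdef
    set c3 : ℝ := max 0 (x 0 + x 1 - (1 - z)) with hc3
    set c1 : ℝ := x 0 - c3 with hc1
    set c2 : ℝ := x 1 - c3 with hc2
    set c0 : ℝ := 1 - z - x 0 - x 1 + c3 with hc0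
    have hc3n : 0 ≤ c3 := le_max_left _ _
    have hc1n : 0 ≤ c1 := by
      rcases le_or_gt (x 0 + x 1 - (1 - z)) 0 with h | h
      · rw [hc1, hc3, max_eq_left h]; linarith
      · rw [hc1, hc3, max_eq_right h.le]; linarith
    have hc2n : 0 ≤ c2 := by
      rcases le_or_gt (x 0 + x 1 - (1 - z)) 0 with h | h
      · rw [hc2, hc3, max_eq_left h]; linarith
      · rw [hc2, hc3, max_eq_right h.le]; linarith
    have hc0n : 0 ≤ c0 := by
      rcases le_or_gt (x 0 + x 1 - (1 - z)) 0 with h | h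
      · rw [hc0, hc3, max_eq_left h]; linarith
      · rw [hc0, hc3, max_eq_right h.le]; linarith
    have hxeq : x = c0 • (0 : Fin 3 → ℝ) + c1 • ![1,0,0] + c2 • ![0,1,0]
        + c3 • ![1,1,0] + z • ![0,0,1] := by
      funext j
      fin_cases j <;>
        simp [hc1, hc2, hzdef, Matrix.cons_val_zero, Matrix.cons_val_one, Matrix.head_cons]
    rw [hxeq]
    have hS : Convex ℝ (convexHull ℝ ({0, ![1, 0, 0], ![0, 1, 0], ![1, 1, 0], ![0, 0, 1]} : Set (Fin 3 → ℝ))) :=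
      convex_convexHull ℝ _
    have m0 : (0 : Fin 3 → ℝ) ∈ convexHull ℝ ({0, ![1, 0, 0], ![0, 1, 0], ![1, 1, 0], ![0, 0, 1]} : Set (Fin 3 → ℝ)) :=
      subset_convexHull ℝ _ (by simp)
    have m1 : (![1,0,0] : Fin 3 → ℝ) ∈ convexHull ℝ ({0, ![1, 0, 0], ![0, 1, 0], ![1, 1, 0], ![0, 0, 1]} : Set (Fin 3 → ℝ)) :=
      subset_convexHull ℝ _ (by simp)
    have m2 : (![0,1,0] : Fin 3 → ℝ) ∈ convexHull ℝ ({0, ![1, 0, 0], ![0, 1, 0], ![1, 1, 0], ![0, 0, 1]} : Set (Fin 3 → ℝ)) :=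
      subset_convexHull ℝ _ (by simp)
    have m3 : (![1,1,0] : Fin 3 → ℝ) ∈ convexHull ℝ ({0, ![1, 0, 0], ![0, 1, 0], ![1, 1, 0], ![0, 0, 1]} : Set (Fin 3 → ℝ)) :=
      subset_convexHull ℝ _ (by simp)
    have m4 : (![0,0,1] : Fin 3 → ℝ) ∈ convexHull ℝ ({0, ![1, 0, 0], ![0, 1, 0], ![1, 1, 0], ![0, 0, 1]} : Set (Fin 3 → ℝ)) :=
      subset_convexHull ℝ _ (by simp)
    have := hS.sum_mem (t := (Finset.univ : Finset (Fin 5)))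
      (w := ![c0, c1, c2, c3, z]) (z := ![0, ![1,0,0], ![0,1,0], ![1,1,0], ![0,0,1]])
      (by intro i _; fin_cases i <;> simpa using by assumption)
      (by simp [Fin.sum_univ_five, hc0]; ring)
      (by intro i _; fin_cases i <;> assumption)
    simpa [Fin.sum_univ_five] using this

lemma stmt16_mem_segB {x : Fin 3 → ℝ} :
    x ∈ segment ℝ (0 : Fin 3 → ℝ) ![1,0,0] ↔ ∃ θ : ℝ, 0 ≤ θ ∧ θ ≤ 1 ∧ x = θ • ![1,0,0] := by
  rw [segment_eq_image]
  constructor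
  · rintro ⟨θ, ⟨h1, h2⟩, rfl⟩; exact ⟨θ, h1, h2, by simp⟩
  · rintro ⟨θ, h1, h2, rfl⟩; exact ⟨θ, ⟨h1, h2⟩, by simp⟩

lemma stmt16_mem_segC {x : Fin 3 → ℝ} :
    x ∈ segment ℝ (0 : Fin 3 → ℝ) ![0,1,0] ↔ ∃ θ : ℝ, 0 ≤ θ ∧ θ ≤ 1 ∧ x = θ • ![0,1,0] := by
  rw [segment_eq_image]
  constructor
  · rintro ⟨θ, ⟨h1, h2⟩, rfl⟩; exact ⟨θ, h1, h2, by simp⟩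
  · rintro ⟨θ, h1, h2, rfl⟩; exact ⟨θ, ⟨h1, h2⟩, by simp⟩

lemma stmt16_addB (s t : ℝ) (hs : 0 ≤ s) :
    stmt16Reg s t + segment ℝ (0 : Fin 3 → ℝ) ![1,0,0] = stmt16Reg (s+1) t := by
  apply Subset.antisymm
  · rintro x ⟨a, ⟨⟨ha1, ha2⟩, ⟨ha3, ha4⟩, ha5, ha6⟩, b, hb, rfl⟩
    obtain ⟨θ, hθ0, hθ1, rfl⟩ := stmt16_mem_segB.mp hb
    refine ⟨⟨?_, ?_⟩, ⟨?_, ?_⟩, ?_, ?_⟩ <;>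
      simp only [Pi.add_apply, Pi.smul_apply, smul_eq_mul, Matrix.cons_val_zero,
        Matrix.cons_val_one, Matrix.head_cons, Matrix.cons_val_two, Matrix.tail_cons] <;> linarith
  · rintro x ⟨⟨hz0, hz1⟩, ⟨hx0, hx1⟩, hy0, hy1⟩
    set θ : ℝ := max 0 (x 0 - (s + 1 - x 2)) with hθ
    have hθ0 : 0 ≤ θ := le_max_left _ _
    have hθ1 : θ ≤ 1 := by
      rcases le_or_gt (x 0 - (s + 1 - x 2)) 0 with h | h
      · rw [hθ, max_eq_left h]; norm_num
      · rw [hθ, max_eq_right h.le]; linarith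
    refine ⟨x - θ • ![1,0,0], ?_, θ • ![1,0,0], stmt16_mem_segB.mpr ⟨θ, hθ0, hθ1, rfl⟩, by ring⟩
    have h1 : 0 ≤ x 0 - θ ∧ x 0 - θ ≤ s + 1 - x 2 := by
      rcases le_or_gt (x 0 - (s + 1 - x 2)) 0 with h | h
      · rw [hθ, max_eq_left h]; constructor <;> linarith
      · rw [hθ, max_eq_right h.le]; constructor <;> linarith
    refine ⟨⟨?_, ?_⟩, ⟨?_, ?_⟩, ?_, ?_⟩ <;>
      simp only [Pi.sub_apply, Pi.smul_apply, smul_eq_mul, Matrix.cons_val_zero,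
        Matrix.cons_val_one, Matrix.head_cons, Matrix.cons_val_two, Matrix.tail_cons] <;>
      first
        | linarith [h1.1, h1.2]
        | (rw [mul_zero]; linarith)
        | (rw [mul_one]; linarith [h1.1, h1.2])

lemma stmt16_addC (s t : ℝ) (ht : 0 ≤ t) :
    stmt16Reg s t + segment ℝ (0 : Fin 3 → ℝ) ![0,1,0] = stmt16Reg s (t+1) := by
  apply Subset.antisymm
  · rintro x ⟨a, ⟨⟨ha1, ha2⟩, ⟨ha3, ha4⟩, ha5, ha6⟩, b, hb, rfl⟩
    obtain ⟨θ, hθ0, hθ1, rfl⟩ := stmt16_mem_segC.mp hb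
    refine ⟨⟨?_, ?_⟩, ⟨?_, ?_⟩, ?_, ?_⟩ <;>
      simp only [Pi.add_apply, Pi.smul_apply, smul_eq_mul, Matrix.cons_val_zero,
        Matrix.cons_val_one, Matrix.head_cons, Matrix.cons_val_two, Matrix.tail_cons] <;> linarith
  · rintro x ⟨⟨hz0, hz1⟩, ⟨hx0, hx1⟩, hy0, hy1⟩
    set θ : ℝ := max 0 (x 1 - (t + 1 - x 2)) with hθ
    have hθ0 : 0 ≤ θ := le_max_left _ _
    have hθ1 : θ ≤ 1 := by
      rcases le_or_gt (x 1 - (t + 1 - x 2)) 0 with h | h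
      · rw [hθ, max_eq_left h]; norm_num
      · rw [hθ, max_eq_right h.le]; linarith
    refine ⟨x - θ • ![0,1,0], ?_, θ • ![0,1,0], stmt16_mem_segC.mpr ⟨θ, hθ0, hθ1, rfl⟩, by ring⟩
    have h1 : 0 ≤ x 1 - θ ∧ x 1 - θ ≤ t + 1 - x 2 := by
      rcases le_or_gt (x 1 - (t + 1 - x 2)) 0 with h | h
      · rw [hθ, max_eq_left h]; constructor <;> linarith
      · rw [hθ, max_eq_right h.le]; constructor <;> linarith
    refine ⟨⟨?_, ?_⟩, ⟨?_, ?_⟩, ?_, ?_⟩ <;>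
      simp only [Pi.sub_apply, Pi.smul_apply, smul_eq_mul, Matrix.cons_val_zero,
        Matrix.cons_val_one, Matrix.head_cons, Matrix.cons_val_two, Matrix.tail_cons] <;>
      first
        | linarith [h1.1, h1.2]
        | (rw [mul_zero]; linarith)
        | (rw [mul_one]; linarith [h1.1, h1.2])

lemma stmt16_vol_Reg (s t : ℝ) (hs : 0 ≤ s) (ht : 0 ≤ t) :
    volume (stmt16Reg s t) = ENNReal.ofReal (s*t + (s+t)/2 + 1/3) := by
  have hmp := measurePreserving_piFinSuccAbove (fun _ : Fin 3 => (volume : Measure ℝ)) 2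
  set e := MeasurableEquiv.piFinSuccAbove (fun _ : Fin 3 => ℝ) 2 with he
  set S : Set (ℝ × (Fin 2 → ℝ)) :=
    {q | q.1 ∈ Icc (0:ℝ) 1 ∧ q.2 0 ∈ Icc 0 (s + 1 - q.1) ∧ q.2 1 ∈ Icc 0 (t + 1 - q.1)} with hS
  have hmeas : MeasurableSet S := by
    have h0 : Measurable fun q : ℝ × (Fin 2 → ℝ) => q.2 0 := (measurable_pi_apply 0).comp measurable_snd
    have h1 : Measurable fun q : ℝ × (Fin 2 → ℝ) => q.2 1 := (measurable_pi_apply 1).comp measurable_snd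
    have h2 : Measurable fun q : ℝ × (Fin 2 → ℝ) => q.1 := measurable_fst
    refine MeasurableSet.inter ?_ (MeasurableSet.inter ?_ ?_) <;>
    · first
      | exact (measurableSet_le measurable_const h2).inter (measurableSet_le h2 measurable_const)
      | exact (measurableSet_le measurable_const h0).inter (measurableSet_le h0 (measurable_const.sub h2))
      | exact (measurableSet_le measurable_const h1).inter (measurableSet_le h1 (measurable_const.sub h2))
  have hpre : stmt16Reg s t = e ⁻¹' S := by
    ext p
    simp only [stmt16Reg, hS, Set.mem_preimage, Set.mem_setOf_eq, he,
      MeasurableEquiv.piFinSuccAbove_apply, Fin.insertNthEquiv, Fin.removeNth]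
    rfl
  rw [hpre]
  have hv : volume (⇑e ⁻¹' S) = (volume : Measure ℝ).prod (volume : Measure (Fin 2 → ℝ)) S :=
    hmp.measure_preimage hmeas.nullMeasurableSet
  rw [hv, Measure.prod_apply hmeas]
  have hslice : ∀ z : ℝ, (volume : Measure (Fin 2 → ℝ)) (Prod.mk z ⁻¹' S)
      = Set.indicator (Icc (0:ℝ) 1) (fun z => ENNReal.ofReal ((s+1-z) * (t+1-z))) z := by
    intro z
    by_cases hz : z ∈ Icc (0:ℝ) 1
    · have hPre : Prod.mk z ⁻¹' S = Set.univ.pi (fun i : Fin 2 => Icc (0:ℝ) (![s+1-z, t+1-z] i)) := by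
        ext f
        simp only [hS, mem_preimage, mem_setOf_eq, Set.mem_pi, Set.mem_univ, forall_true_left,
          Fin.forall_fin_two, mem_Icc, Matrix.cons_val_zero, Matrix.cons_val_one, Matrix.head_cons]
        constructor
        · rintro ⟨_, h2, h3⟩; exact ⟨h2, h3⟩
        · intro h; exact ⟨⟨hz.1, hz.2⟩, h.1, h.2⟩
      rw [hPre, volume_pi_pi, Set.indicator_of_mem hz, Fin.prod_univ_two]
      simp only [Matrix.cons_val_zero, Matrix.cons_val_one, Matrix.head_cons, Real.volume_Icc,
        sub_zero]
      rw [← ENNReal.ofReal_mul (by linarith [hz.2])]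
    · have hPre : Prod.mk z ⁻¹' S = ∅ := by
        ext f
        simp only [hS, mem_preimage, mem_setOf_eq, mem_empty_iff_false, iff_false]
        exact fun hf => hz hf.1
      rw [hPre, Set.indicator_of_notMem hz]; simp
  simp_rw [hslice]
  rw [lintegral_indicator measurableSet_Icc]
  have hcont : Continuous fun z : ℝ => (s+1-z)*(t+1-z) := by continuity
  rw [← ofReal_integral_eq_lintegral_ofReal hcont.integrableOn_Icc.integrable ?_]
  · congr 1
    rw [integral_Icc_eq_integral_Ioc, ← intervalIntegral.integral_of_le (by norm_num : (0:ℝ) ≤ 1)]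
    have key : ∀ z : ℝ, HasDerivAt (fun z : ℝ => z^3/3 - (s+t+2)*(z^2/2) + (s+1)*((t+1)*z))
        ((s+1-z)*(t+1-z)) z := by
      intro z
      have h := (((hasDerivAt_pow 3 z).div_const 3).sub
        (((hasDerivAt_pow 2 z).div_const 2).const_mul (s+t+2))).add
        ((hasDerivAt_id z).const_mul ((s+1)*((t+1))))
      refine (h.congr_deriv ?_).congr_of_eventuallyEq ?_
      · push_cast; ring
      · exact Filter.Eventually.of_forall (fun w => by simp only [Pi.add_apply, Pi.sub_apply, id_eq]; ring)
    rw [intervalIntegral.integral_eq_sub_of_hasDerivAt (fun z _ => key z)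
      ((by continuity : Continuous fun z : ℝ => (s+1-z)*(t+1-z)).intervalIntegrable 0 1)]
    ring
  · filter_upwards [ae_restrict_mem measurableSet_Icc] with z hz
    have h1 := hz.1; have h2 := hz.2
    have : 0 ≤ s + 1 - z := by linarith
    have : 0 ≤ t + 1 - z := by linarith
    positivity

lemma stmt16_vol_plane : volume {p : Fin 3 → ℝ | p 2 = 0} = 0 := by
  have : {p : Fin 3 → ℝ | p 2 = 0}
      = Set.univ.pi (fun i : Fin 3 => if i = 2 then ({0} : Set ℝ) else Set.univ) := by
    ext p
    simp only [mem_setOf_eq, Set.mem_pi, Set.mem_univ, forall_true_left]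
    constructor
    · intro h i; fin_cases i <;> simp [h]
    · intro h; have := h 2; simpa using this
  rw [this, volume_pi_pi, Fin.prod_univ_three]
  norm_num

end Aux

theorem stmt_16
    (V : ConvexBody (Fin 3 → ℝ) → ConvexBody (Fin 3 → ℝ) → ConvexBody (Fin 3 → ℝ) → ℝ)
    (hsymm12 : ∀ K L M, V K L M = V L K M)
    (hsymm23 : ∀ K L M, V K L M = V K M L)
    (hadd : ∀ K L M N, V (K + L) M N = V K M N + V L M N)
    (hsmul : ∀ (c : ℝ) K M N, 0 ≤ c → V (c • K) M N = c * V K M N)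
    (hvol : ∀ K, V K K K = (volume (K : Set (Fin 3 → ℝ))).toReal)
    (A B C : ConvexBody (Fin 3 → ℝ))
    (hA : A = pyramidCB) (hB : B = segCB ![1, 0, 0]) (hC : C = segCB ![0, 1, 0]) :
    V A A A * V A B C = 2 * (V A A B * V A A C) := by
  -- derived multilinearity
  have hadd2 : ∀ K L M N, V K (L + M) N = V K L N + V K M N := by
    intro K L M N
    rw [hsymm12, hadd, hsymm12 L, hsymm12 M]
  have hadd3 : ∀ K L M N, V K N (L + M) = V K N L + V K N M := by
    intro K L M N
    rw [hsymm23, hadd2, hsymm23 K L, hsymm23 K M]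
  have cube : ∀ K L, V (K + L) (K + L) (K + L)
      = V K K K + 3 * V K K L + 3 * V K L L + V L L L := by
    intro K L
    rw [hadd, hadd2, hadd2, hadd3, hadd3, hadd3, hadd3]
    have h1 : V K L K = V K K L := by rw [hsymm23]
    have h2 : V L K K = V K K L := by rw [hsymm12, hsymm23]
    have h3 : V L K L = V K L L := by rw [hsymm12]
    have h4 : V L L K = V K L L := by rw [hsymm23, hsymm12]
    rw [h1, h2, h3, h4]; ring
  have sq : ∀ K L M, V (K + L) (K + L) M = V K K M + 2 * V K L M + V L L M := by
    intro K L M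
    rw [hadd, hadd2, hadd2]
    have : V L K M = V K L M := by rw [hsymm12]
    rw [this]; ring
  -- set identities
  have hAset : (A : Set (Fin 3 → ℝ)) = stmt16Reg 0 0 := by
    rw [hA]; exact stmt16_pyr_eq
  have hBset : (B : Set (Fin 3 → ℝ)) = segment ℝ 0 ![1,0,0] := by rw [hB]; rfl
  have hCset : (C : Set (Fin 3 → ℝ)) = segment ℝ 0 ![0,1,0] := by rw [hC]; rfl
  -- volumes of the relevant bodies
  have volA : (volume (A : Set (Fin 3 → ℝ))).toReal = 1/3 := by
    rw [hAset, stmt16_vol_Reg 0 0 le_rfl le_rfl, ENNReal.toReal_ofReal (by norm_num)]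
    norm_num
  have volAB : (volume ((A + B : ConvexBody (Fin 3 → ℝ)) : Set (Fin 3 → ℝ))).toReal = 5/6 := by
    rw [ConvexBody.coe_add, hAset, hBset, stmt16_addB 0 0 le_rfl]
    norm_num
    rw [stmt16_vol_Reg 1 0 (by norm_num) le_rfl, ENNReal.toReal_ofReal (by norm_num)]
    norm_num
  have volABB : (volume ((A + B + B : ConvexBody (Fin 3 → ℝ)) : Set (Fin 3 → ℝ))).toReal = 4/3 := by
    rw [ConvexBody.coe_add, ConvexBody.coe_add, hAset, hBset, stmt16_addB 0 0 le_rfl]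
    norm_num
    rw [stmt16_addB 1 0 (by norm_num)]
    norm_num
    rw [stmt16_vol_Reg 2 0 (by norm_num) le_rfl, ENNReal.toReal_ofReal (by norm_num)]
    norm_num
  have volAC : (volume ((A + C : ConvexBody (Fin 3 → ℝ)) : Set (Fin 3 → ℝ))).toReal = 5/6 := by
    rw [ConvexBody.coe_add, hAset, hCset, stmt16_addC 0 0 le_rfl]
    norm_num
    rw [stmt16_vol_Reg 0 1 le_rfl (by norm_num), ENNReal.toReal_ofReal (by norm_num)]
    norm_num
  have volACC : (volume ((A + C + C : ConvexBody (Fin 3 → ℝ)) : Set (Fin 3 → ℝ))).toReal = 4/3 := by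
    rw [ConvexBody.coe_add, ConvexBody.coe_add, hAset, hCset, stmt16_addC 0 0 le_rfl]
    norm_num
    rw [stmt16_addC 0 1 (by norm_num)]
    norm_num
    rw [stmt16_vol_Reg 0 2 le_rfl (by norm_num), ENNReal.toReal_ofReal (by norm_num)]
    norm_num
  have volABC : (volume ((A + B + C : ConvexBody (Fin 3 → ℝ)) : Set (Fin 3 → ℝ))).toReal = 7/3 := by
    rw [ConvexBody.coe_add, ConvexBody.coe_add, hAset, hBset, hCset, stmt16_addB 0 0 le_rfl]
    norm_num
    rw [stmt16_addC 1 0 le_rfl]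
    norm_num
    rw [stmt16_vol_Reg 1 1 (by norm_num) (by norm_num), ENNReal.toReal_ofReal (by norm_num)]
    norm_num
  -- planar bodies have zero volume
  have hplaneB : ∀ x ∈ segment ℝ (0 : Fin 3 → ℝ) ![1,0,0], x 2 = 0 := by
    intro x hx
    obtain ⟨θ, _, _, rfl⟩ := stmt16_mem_segB.mp hx
    simp
  have hplaneC : ∀ x ∈ segment ℝ (0 : Fin 3 → ℝ) ![0,1,0], x 2 = 0 := by
    intro x hx
    obtain ⟨θ, _, _, rfl⟩ := stmt16_mem_segC.mp hx
    simp
  have planar_vol : ∀ (K : ConvexBody (Fin 3 → ℝ)),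
      (∀ x ∈ (K : Set (Fin 3 → ℝ)), x 2 = 0) → (volume (K : Set (Fin 3 → ℝ))).toReal = 0 := by
    intro K hK
    have : volume (K : Set (Fin 3 → ℝ)) = 0 :=
      measure_mono_null (fun x hx => hK x hx) stmt16_vol_plane
    rw [this]; rfl
  have volB : (volume (B : Set (Fin 3 → ℝ))).toReal = 0 := by
    apply planar_vol; rw [hBset]; exact hplaneB
  have volC : (volume (C : Set (Fin 3 → ℝ))).toReal = 0 := by
    apply planar_vol; rw [hCset]; exact hplaneC
  have volBC : (volume ((B + C : ConvexBody (Fin 3 → ℝ)) : Set (Fin 3 → ℝ))).toReal = 0 := by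
    apply planar_vol
    rw [ConvexBody.coe_add, hBset, hCset]
    rintro x ⟨a, ha, b, hb, rfl⟩
    simp [Pi.add_apply, hplaneB a ha, hplaneC b hb]
  have volBCC : (volume ((B + C + C : ConvexBody (Fin 3 → ℝ)) : Set (Fin 3 → ℝ))).toReal = 0 := by
    apply planar_vol
    rw [ConvexBody.coe_add, ConvexBody.coe_add, hBset, hCset]
    rintro x ⟨a, ⟨a', ha', b', hb', rfl⟩, b, hb, rfl⟩
    simp [Pi.add_apply, hplaneB a' ha', hplaneC b' hb', hplaneC b hb]
  -- the linear system
  have E1 : V A A A = 1/3 := by rw [hvol, volA]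
  have E2 : V B B B = 0 := by rw [hvol, volB]
  have E3 : V C C C = 0 := by rw [hvol, volC]
  have E4 : V A A A + 3 * V A A B + 3 * V A B B + V B B B = 5/6 := by
    rw [← cube, hvol, volAB]
  have E5 : V A A A + 3 * V A A (B + B) + 3 * V A (B + B) (B + B) + V (B+B) (B+B) (B+B) = 4/3 := by
    rw [← cube, ← add_assoc, hvol, volABB]
  have E5' : V A A A + 6 * V A A B + 12 * V A B B + 8 * V B B B = 4/3 := by
    have e1 : V A A (B + B) = 2 * V A A B := by rw [hadd3]; ring
    have e2 : V A (B + B) (B + B) = 4 * V A B B := by rw [hadd2, hadd3]; ring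
    have e3 : V (B+B) (B+B) (B+B) = 8 * V B B B := by rw [cube]; ring
    rw [e1, e2, e3] at E5; linarith
  have E6 : V A A A + 3 * V A A C + 3 * V A C C + V C C C = 5/6 := by
    rw [← cube, hvol, volAC]
  have E7 : V A A A + 6 * V A A C + 12 * V A C C + 8 * V C C C = 4/3 := by
    have E7a : V A A A + 3 * V A A (C + C) + 3 * V A (C + C) (C + C)
        + V (C+C) (C+C) (C+C) = 4/3 := by
      rw [← cube, ← add_assoc, hvol, volACC]
    have e1 : V A A (C + C) = 2 * V A A C := by rw [hadd3]; ring
    have e2 : V A (C + C) (C + C) = 4 * V A C C := by rw [hadd2, hadd3]; ring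
    have e3 : V (C+C) (C+C) (C+C) = 8 * V C C C := by rw [cube]; ring
    rw [e1, e2, e3] at E7a; linarith
  have E8 : V B B B + 3 * V B B C + 3 * V B C C + V C C C = 0 := by
    rw [← cube, hvol, volBC]
  have E9 : V B B B + 6 * V B B C + 12 * V B C C + 8 * V C C C = 0 := by
    have E9a : V B B B + 3 * V B B (C + C) + 3 * V B (C + C) (C + C)
        + V (C+C) (C+C) (C+C) = 0 := by
      rw [← cube, ← add_assoc, hvol, volBCC]
    have e1 : V B B (C + C) = 2 * V B B C := by rw [hadd3]; ring
    have e2 : V B (C + C) (C + C) = 4 * V B C C := by rw [hadd2, hadd3]; ring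
    have e3 : V (C+C) (C+C) (C+C) = 8 * V C C C := by rw [cube]; ring
    rw [e1, e2, e3] at E9a; linarith
  have E10 : (V A A A + 3 * V A A B + 3 * V A B B + V B B B)
      + 3 * (V A A C + 2 * V A B C + V B B C) + 3 * (V A C C + V B C C) + V C C C = 7/3 := by
    have h := hvol (A + B + C)
    rw [volABC, cube (A + B) C, sq A B C, hadd A B C C, cube A B] at h
    linarith
  -- solve
  have hab : V A A B = 1/6 := by linarith
  have hac : V A A C = 1/6 := by linarith
  have habb : V A B B = 0 := by linarith
  have hacc : V A C C = 0 := by linarith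
  have hbbc : V B B C = 0 := by linarith
  have hbcc : V B C C = 0 := by linarith
  have habc : V A B C = 1/6 := by linarith
  rw [E1, hab, hac, habc]
  norm_num
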